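/- If S is a C³ solution of S'' = S - ρ on [0,L] with S'(0) = S'(L) = 0 for ρ ∈ C¹, then ∫₀^L (S - ρ̄)² + 2(S')² + (S'')² dx = ∫₀^L (ρ - ρ̄)² dx, where ρ̄ = (1/L)∫₀^L ρ dx. -/

import Mathlib

/-- H²-energy identity: for a C³ solution of S'' = S - ρ on [0,L] with Neumann
conditions, ∫ (S-ρ̄)² + 2(S')² + (S'')² = ∫ (ρ-ρ̄)². -/
theorem energy_identity_H2 (L : ℝ) (hL : 0 < L) (ρ ρ' S S' S'' S''' : ℝ → ℝ)
    (hρ' : ∀ x ∈ Set.Icc (0:ℝ) L, HasDerivAt ρ (ρ' x) x)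
    (hρ'c : ContinuousOn ρ' (Set.Icc (0:ℝ) L))
    (hS1 : ∀ x ∈ Set.Icc (0:ℝ) L, HasDerivAt S (S' x) x)
    (hS2 : ∀ x ∈ Set.Icc (0:ℝ) L, HasDerivAt S' (S'' x) x)
    (hS3 : ∀ x ∈ Set.Icc (0:ℝ) L, HasDerivAt S'' (S''' x) x)
    (hS3c : ContinuousOn S''' (Set.Icc (0:ℝ) L))
    (heq : ∀ x ∈ Set.Icc (0:ℝ) L, S'' x = S x - ρ x)
    (hS'0 : S' 0 = 0) (hS'L : S' L = 0)
    (ρbar : ℝ) (hbar : ρbar = (1/L) * ∫ x in (0:ℝ)..L, ρ x) :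
    (∫ x in (0:ℝ)..L, ((S x - ρbar)^2 + 2*(S' x)^2 + (S'' x)^2))
      = ∫ x in (0:ℝ)..L, (ρ x - ρbar)^2 := by
  have hIcc : Set.uIcc (0:ℝ) L = Set.Icc 0 L := Set.uIcc_of_le hL.le
  have hScont : ContinuousOn S (Set.Icc 0 L) :=
    fun x hx => (hS1 x hx).continuousAt.continuousWithinAt
  have hS'cont : ContinuousOn S' (Set.Icc 0 L) :=
    fun x hx => (hS2 x hx).continuousAt.continuousWithinAt
  have hS''cont : ContinuousOn S'' (Set.Icc 0 L) :=
    fun x hx => (hS3 x hx).continuousAt.continuousWithinAt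
  have hρcont : ContinuousOn ρ (Set.Icc 0 L) :=
    fun x hx => (hρ' x hx).continuousAt.continuousWithinAt
  set g : ℝ → ℝ := fun x =>
    ((S x - ρbar)^2 + 2*(S' x)^2 + (S'' x)^2) - (ρ x - ρbar)^2 with hg
  have key : ∀ x ∈ Set.uIcc (0:ℝ) L,
      HasDerivAt (fun x => 2*(S x - ρbar)*(S' x)) (g x) x := by
    rw [hIcc]
    intro x hx
    have h : HasDerivAt (fun y => 2*(S y - ρbar)*(S' y))
        (2 * S' x * S' x + 2 * (S x - ρbar) * S'' x) x := (((hS1 x hx).sub_const ρbar).const_mul 2).mul (hS2 x hx)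
    convert h using 1
    have h2 := heq x hx
    simp only [hg]
    rw [show ρ x - ρbar = (S x - ρbar) - S'' x from by rw [h2]; ring]
    ring
  have hgint : IntervalIntegrable g MeasureTheory.volume 0 L := by
    apply ContinuousOn.intervalIntegrable
    rw [hIcc]
    exact ((((hScont.sub continuousOn_const).pow 2).add
      (continuousOn_const.mul (hS'cont.pow 2))).add
      (hS''cont.pow 2)).sub ((hρcont.sub continuousOn_const).pow 2)
  have hint : (∫ x in (0:ℝ)..L, g x)
      = 2*(S L - ρbar)*(S' L) - 2*(S 0 - ρbar)*(S' 0) :=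
    intervalIntegral.integral_eq_sub_of_hasDerivAt key hgint
  rw [hS'0, hS'L] at hint
  simp only [mul_zero, sub_zero] at hint
  have h1 : IntervalIntegrable (fun x => (S x - ρbar)^2 + 2*(S' x)^2 + (S'' x)^2)
      MeasureTheory.volume 0 L := by
    apply ContinuousOn.intervalIntegrable
    rw [hIcc]
    exact (((hScont.sub continuousOn_const).pow 2).add
      ((continuousOn_const.mul (hS'cont.pow 2)))).add (hS''cont.pow 2)
  have h2 : IntervalIntegrable (fun x => (ρ x - ρbar)^2) MeasureTheory.volume 0 L := by
    apply ContinuousOn.intervalIntegrable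
    rw [hIcc]
    exact (hρcont.sub continuousOn_const).pow 2
  have := intervalIntegral.integral_sub h1 h2
  rw [hg] at hint
  simp only [this] at hint
  linarith
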